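/- Let 1 ≤ k and n·k ≤ m. Then m! · ((m−k)!)^n / ((m−nk)! · (m!)^n) ≥ ((m−nk+1)/m)^{nk}, as an inequality of real numbers. -/

import Mathlib

lemma pow_le_descFactorial_aux (m : ℕ) : ∀ r : ℕ, r ≤ m → (m - r + 1) ^ r ≤ m.descFactorial r := by
  intro r hr
  rw [Nat.descFactorial_eq_prod_range]
  calc (m - r + 1) ^ r = ∏ _i ∈ Finset.range r, (m - r + 1) := by
        rw [Finset.prod_const, Finset.card_range]
    _ ≤ ∏ i ∈ Finset.range r, (m - i) := by
        apply Finset.prod_le_prod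
        · intro i _; exact Nat.zero_le _
        · intro i hi
          have := Finset.mem_range.mp hi
          omega

lemma descFactorial_pos_aux {m r : ℕ} (h : r ≤ m) : 0 < m.descFactorial r := by
  rcases Nat.eq_zero_or_pos (m.descFactorial r) with h0 | h0
  · exact absurd (Nat.descFactorial_eq_zero_iff_lt.mp h0) (by omega)
  · exact h0

/-- For `1 ≤ k` and `n·k ≤ m`, as real numbers,
`m!·((m-k)!)^n / ((m-nk)!·(m!)^n) ≥ ((m - nk + 1)/m)^(nk)`. -/
theorem kapproval_fraction_lower_bound (m n k : ℕ) (hk : 1 ≤ k) (hnk : n * k ≤ m) :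
    (((m : ℝ) - (n * k : ℕ) + 1) / (m : ℝ)) ^ (n * k) ≤
      ((Nat.factorial m : ℝ) * (Nat.factorial (m - k) : ℝ) ^ n) /
        ((Nat.factorial (m - n * k) : ℝ) * (Nat.factorial m : ℝ) ^ n) := by
  rcases Nat.eq_zero_or_pos n with hn | hn
  · subst hn
    simp only [Nat.zero_mul, pow_zero, Nat.sub_zero, mul_one]
    rw [div_self (by positivity : (Nat.factorial m : ℝ) ≠ 0)]
  have hkm : k ≤ m := le_trans (by nlinarith) hnk
  have hm1 : 1 ≤ m := le_trans hk hkm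
  have hd1 : (0:ℝ) < (m.descFactorial k : ℝ) := by
    exact_mod_cast descFactorial_pos_aux hkm
  have hd2 : (0:ℝ) < (m.descFactorial (n * k) : ℝ) := by
    exact_mod_cast descFactorial_pos_aux hnk
  have hf : (0:ℝ) < (m.factorial : ℝ) := by positivity
  have h1 : ((m - k).factorial : ℝ) * (m.descFactorial k : ℝ) = (m.factorial : ℝ) := by
    exact_mod_cast congrArg (Nat.cast (R := ℝ)) (Nat.factorial_mul_descFactorial hkm)
  have h2 : ((m - n * k).factorial : ℝ) * (m.descFactorial (n * k) : ℝ) = (m.factorial : ℝ) := by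
    exact_mod_cast congrArg (Nat.cast (R := ℝ)) (Nat.factorial_mul_descFactorial hnk)
  have hRHS : ((Nat.factorial m : ℝ) * (Nat.factorial (m - k) : ℝ) ^ n) /
        ((Nat.factorial (m - n * k) : ℝ) * (Nat.factorial m : ℝ) ^ n)
      = (m.descFactorial (n * k) : ℝ) / (m.descFactorial k : ℝ) ^ n := by
    have hfk : ((m - k).factorial : ℝ) = (m.factorial : ℝ) / (m.descFactorial k : ℝ) :=
      eq_div_of_mul_eq hd1.ne' h1
    have hfnk : ((m - n * k).factorial : ℝ)
        = (m.factorial : ℝ) / (m.descFactorial (n * k) : ℝ) :=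
      eq_div_of_mul_eq hd2.ne' h2
    rw [hfk, hfnk]
    rw [div_pow]
    field_simp
  rw [hRHS]
  have hcast : ((m : ℝ) - (n * k : ℕ) + 1) = ((m - n * k + 1 : ℕ) : ℝ) := by
    push_cast [Nat.cast_sub hnk]; ring
  rw [hcast, div_pow]
  apply div_le_div₀
  · positivity
  · exact_mod_cast pow_le_descFactorial_aux m (n * k) hnk
  · positivity
  · have : m.descFactorial k ≤ m ^ k := Nat.descFactorial_le_pow m k
    calc ((m.descFactorial k : ℝ)) ^ n ≤ ((m : ℝ) ^ k) ^ n := by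
          apply pow_le_pow_left₀ (by positivity)
          exact_mod_cast this
      _ = (m : ℝ) ^ (n * k) := by rw [← pow_mul, mul_comm]
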